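/- Probability that λ̂_k falls below the threshold (Lemma A.2, part 2): Let (X,W) ∈ 𝓕⁸_{η,τ}, α > 0, ν ≥ 0, and set I₁ := {k ∈ ℤ : λ_k ≥ 4·τ·α·γ_k^ν}. Then there exists a universal constant C > 0 such that sup_{k∈I₁} P(λ̂_k < α·γ_k^ν) ≤ (C·η/(α·n))·E‖X‖²·(1 + E‖W‖²/(α·n)). -/

import Mathlib

open MeasureTheory Complex Filter Real Set ProbabilityTheory
open scoped ENNReal NNReal Topology ComplexConjugate Classical

noncomputable section

namespace FLIR

instance : Fact ((0:ℝ) < 1) := ⟨one_pos⟩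

/-- `H = L²([0,1],ℂ)`, realized as the `L²` space of the circle of circumference `1`
with its normalized Haar (Lebesgue) measure. -/
abbrev H : Type := Lp ℂ 2 (@AddCircle.haarAddCircle 1 _)

instance : MeasurableSpace H := borel H
instance : BorelSpace H := ⟨rfl⟩

/-- The Fourier coefficient `⟨f, φ_k⟩ = ∫₀¹ f(t) e^{-2πikt} dt`. -/
def coef (f : H) (k : ℤ) : ℂ := fourierBasis.repr f k

/-- Sobolev weights `γ_k = 1 + |2πk|²`. -/
def γw (k : ℤ) : ℝ := 1 + (2 * Real.pi * (k : ℝ)) ^ 2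

/-- Squared Sobolev norm `‖f‖_ν² = ∑_k γ_k^ν |⟨f,φ_k⟩|²` (with value in `[0,∞]`). -/
def sobSq (ν : ℝ) (f : H) : ℝ≥0∞ := ∑' k : ℤ, ENNReal.ofReal (γw k ^ ν * ‖coef f k‖ ^ 2)

/-- Squared Sobolev distance between a coefficient sequence `b` and `f`. -/
def sobDiff (ν : ℝ) (b : ℤ → ℂ) (f : H) : ℝ≥0∞ :=
  ∑' k : ℤ, ENNReal.ofReal (γw k ^ ν * ‖b k - coef f k‖ ^ 2)

variable {Ω : Type} [MeasurableSpace Ω]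

/-- `x_k = E|⟨X,φ_k⟩|²`. -/
def xPop (μ : Measure Ω) (X : Ω → H) (k : ℤ) : ℝ := ∫ ω, ‖coef (X ω) k‖ ^ 2 ∂μ

/-- `w_k = E|⟨W,φ_k⟩|²`. -/
def wPop (μ : Measure Ω) (W : Ω → H) (k : ℤ) : ℝ := ∫ ω, ‖coef (W ω) k‖ ^ 2 ∂μ

/-- `c_k = E[⟨φ_k,X⟩ ⟨W,φ_k⟩]`. -/
def cPop (μ : Measure Ω) (X W : Ω → H) (k : ℤ) : ℂ :=
  ∫ ω, conj (coef (X ω) k) * coef (W ω) k ∂μ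

/-- `λ_k = |c_k|²/w_k`. -/
def lamPop (μ : Measure Ω) (X W : Ω → H) (k : ℤ) : ℝ :=
  ‖cPop μ X W k‖ ^ 2 / wPop μ W k

/-- `λ₊ = max(1, sup_k λ_k)`. -/
def lamPlus (μ : Measure Ω) (X W : Ω → H) : ℝ := max 1 (⨆ k : ℤ, lamPop μ X W k)

/-- `E‖X‖²`. -/
def EnormSq (μ : Measure Ω) (X : Ω → H) : ℝ := ∫ ω, ‖X ω‖ ^ 2 ∂μ

/-- The moment class `𝓕^m_{η,τ}`. -/
def memF (μ : Measure Ω) (X W : Ω → H) (m : ℕ) (η τ : ℝ) : Prop :=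
  1 ≤ η ∧ 1 ≤ τ ∧
  (∀ k : ℤ, ∫⁻ ω, ENNReal.ofReal (‖coef (X ω) k‖ ^ m) ∂μ
      ≤ ENNReal.ofReal (η * xPop μ X k ^ ((m : ℝ) / 2))) ∧
  (∀ k : ℤ, ∫⁻ ω, ENNReal.ofReal (‖coef (W ω) k‖ ^ m) ∂μ
      ≤ ENNReal.ofReal (η * wPop μ W k ^ ((m : ℝ) / 2))) ∧
  (∀ k : ℤ, lamPop μ X W k / wPop μ W k ≤ τ)

/-- The error class `𝓔^m_η`: centered, unit variance, `m`-th moment bounded by `η`. -/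
def memE (μ : Measure Ω) (U : Ω → ℝ) (m : ℕ) (η : ℝ) : Prop :=
  Measurable U ∧ Integrable U μ ∧ Integrable (fun ω => (U ω) ^ 2) μ ∧
  (∫ ω, U ω ∂μ) = 0 ∧ (∫ ω, (U ω) ^ 2 ∂μ) = 1 ∧
  ∫⁻ ω, ENNReal.ofReal (|U ω| ^ m) ∂μ ≤ ENNReal.ofReal η

/-- The link condition `(λ_k) ∈ 𝒮_{κ,d}`. -/
def memS (μ : Measure Ω) (X W : Ω → H) (κ : ℝ → ℝ) (d ν p : ℝ) : Prop :=
  ∀ k : ℤ,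
    κ (lamPop μ X W k / (d * γw k ^ ν * lamPlus μ X W)) ≤ γw k ^ (ν - p) ∧
    γw k ^ (ν - p) ≤ κ (d * lamPop μ X W k / (γw k ^ ν * lamPlus μ X W))

/-- An index function: continuous, strictly increasing, positive, vanishing at `0⁺`. -/
def IndexFun (κ : ℝ → ℝ) : Prop :=
  StrictMonoOn κ (Set.Ioi 0) ∧ ContinuousOn κ (Set.Ioi 0) ∧
  (∀ t : ℝ, 0 < t → 0 < κ t) ∧
  Filter.Tendsto κ (nhdsWithin 0 (Set.Ioi 0)) (nhds 0)

/-- Structural assumptions of the model: measurability, second moments, centeredness,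
the regression equation `Y = ∫ βX + σU`, exogeneity of `W`, joint second order
stationarity (in the form of uncorrelated distinct Fourier coefficients) and
nondegeneracy `c_k ≠ 0`. -/
def Model (μ : Measure Ω) (Y : Ω → ℝ) (X W : Ω → H) (U : Ω → ℝ) (β : H) (σ : ℝ) : Prop :=
  Measurable Y ∧ Measurable X ∧ Measurable W ∧ Measurable U ∧
  Integrable (fun ω => ‖X ω‖ ^ 2) μ ∧ Integrable (fun ω => ‖W ω‖ ^ 2) μ ∧
  (∫ ω, X ω ∂μ) = 0 ∧ (∫ ω, W ω ∂μ) = 0 ∧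
  (∀ᵐ ω ∂μ, (Y ω : ℂ) =
      (∫ t : AddCircle (1:ℝ), β t * (X ω) t ∂(@AddCircle.haarAddCircle 1 _)) + σ * U ω) ∧
  (∀ k : ℤ, (∫ ω, (U ω : ℂ) * coef (W ω) k ∂μ) = 0) ∧
  (∀ j k : ℤ, j ≠ k → (∫ ω, conj (coef (X ω) j) * coef (W ω) k ∂μ) = 0) ∧
  (∀ k : ℤ, cPop μ X W k ≠ 0)

/-- Structural assumptions on the pair `(X,W)` alone. -/
def PairModel (μ : Measure Ω) (X W : Ω → H) : Prop :=
  Measurable X ∧ Measurable W ∧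
  Integrable (fun ω => ‖X ω‖ ^ 2) μ ∧ Integrable (fun ω => ‖W ω‖ ^ 2) μ ∧
  (∫ ω, X ω ∂μ) = 0 ∧ (∫ ω, W ω ∂μ) = 0 ∧
  (∀ j k : ℤ, j ≠ k → (∫ ω, conj (coef (X ω) j) * coef (W ω) k ∂μ) = 0) ∧
  (∀ k : ℤ, cPop μ X W k ≠ 0)

/-- The sample `(Y_i,X_i,W_i)` is i.i.d. with common distribution that of `(Y₀,X₀,W₀)`. -/
def IIDSample (μ : Measure Ω) (n : ℕ) (Y : Fin n → Ω → ℝ) (X W : Fin n → Ω → H)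
    (Y0 : Ω → ℝ) (X0 W0 : Ω → H) : Prop :=
  (∀ i, Measurable (Y i)) ∧ (∀ i, Measurable (X i)) ∧ (∀ i, Measurable (W i)) ∧
  iIndepFun (fun i ω => (Y i ω, X i ω, W i ω)) μ ∧
  (∀ i, Measure.map (fun ω => (Y i ω, X i ω, W i ω)) μ
      = Measure.map (fun ω => (Y0 ω, X0 ω, W0 ω)) μ)

/-- The sample `(X_i,W_i)` is i.i.d. with common distribution that of `(X₀,W₀)`. -/
def IIDSampleXW (μ : Measure Ω) (n : ℕ) (X W : Fin n → Ω → H) (X0 W0 : Ω → H) : Prop :=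
  (∀ i, Measurable (X i)) ∧ (∀ i, Measurable (W i)) ∧
  iIndepFun (fun i ω => (X i ω, W i ω)) μ ∧
  (∀ i, Measure.map (fun ω => (X i ω, W i ω)) μ = Measure.map (fun ω => (X0 ω, W0 ω)) μ)

/-- `ĉ_k = n⁻¹ ∑ᵢ ⟨φ_k,X_i⟩⟨W_i,φ_k⟩`. -/
def cHat (n : ℕ) (X W : Fin n → Ω → H) (k : ℤ) (ω : Ω) : ℂ :=
  (n : ℂ)⁻¹ * ∑ i, conj (coef (X i ω) k) * coef (W i ω) k

/-- `ŵ_k = n⁻¹ ∑ᵢ |⟨W_i,φ_k⟩|²`. -/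
def wHat (n : ℕ) (W : Fin n → Ω → H) (k : ℤ) (ω : Ω) : ℝ :=
  (n : ℝ)⁻¹ * ∑ i, ‖coef (W i ω) k‖ ^ 2

/-- `λ̂_k = (|ĉ_k|²/ŵ_k)·1{ŵ_k ≥ α}`. -/
def lamHat (α : ℝ) (n : ℕ) (X W : Fin n → Ω → H) (k : ℤ) (ω : Ω) : ℝ :=
  if α ≤ wHat n W k ω then ‖cHat n X W k ω‖ ^ 2 / wHat n W k ω else 0

/-- `ĝ_k = (conj ĉ_k / ŵ_k)·1{ŵ_k ≥ α}· n⁻¹ ∑ᵢ Y_i ⟨W_i,φ_k⟩`. -/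
def gHat (α : ℝ) (n : ℕ) (Y : Fin n → Ω → ℝ) (X W : Fin n → Ω → H) (k : ℤ) (ω : Ω) : ℂ :=
  (if α ≤ wHat n W k ω then conj (cHat n X W k ω) / (wHat n W k ω : ℂ) else 0) *
    ((n : ℂ)⁻¹ * ∑ i, (Y i ω : ℂ) * coef (W i ω) k)

/-- Fourier coefficients of the estimator `β̂_ν`. -/
def bHat (ν α : ℝ) (n : ℕ) (Y : Fin n → Ω → ℝ) (X W : Fin n → Ω → H) (k : ℤ) (ω : Ω) : ℂ :=
  if α * γw k ^ ν ≤ lamHat α n X W k ω then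
    gHat α n Y X W k ω / (lamHat α n X W k ω : ℂ) else 0

/-- The residual process `T_{n,k} = n⁻¹ ∑ᵢ Y_i ⟨W_i,φ_k⟩ − β_k ĉ_k`. -/
def Tnk (n : ℕ) (Y : Fin n → Ω → ℝ) (X W : Fin n → Ω → H) (β : H) (k : ℤ) (ω : Ω) : ℂ :=
  (n : ℂ)⁻¹ * ∑ i, (Y i ω : ℂ) * coef (W i ω) k - coef β k * cHat n X W k ω

/-- The `𝒲_ν`-risk `E‖β̂_ν − β‖_ν²` of the estimator. -/
def risk (μ : Measure Ω) (ν α : ℝ) (n : ℕ) (Y : Fin n → Ω → ℝ) (X W : Fin n → Ω → H)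
    (β : H) : ℝ≥0∞ :=
  ∫⁻ ω, sobDiff ν (fun k => bHat ν α n Y X W k ω) β ∂μ

lemma coef_continuous (k : ℤ) : Continuous fun f : H => coef f k := by
  have : (fun f : H => coef f k) = fun f : H => (innerSL ℂ (fourierBasis k)) f := by
    funext f
    simp [coef, fourierBasis.repr_apply_apply]
  rw [this]
  exact (innerSL ℂ (fourierBasis k)).continuous

lemma coef_meas (k : ℤ) : Measurable fun f : H => coef f k :=
  (coef_continuous k).measurable

lemma norm_coef_le (f : H) (k : ℤ) : ‖coef f k‖ ≤ ‖f‖ := by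
  have h1 : ‖fourierBasis.repr f‖ = ‖f‖ := fourierBasis.repr.norm_map f
  have := lp.norm_apply_le_norm (two_ne_zero) (fourierBasis.repr f) k
  rw [h1] at this
  exact this

lemma map_lintegral {Ω : Type} [MeasurableSpace Ω] {μ : Measure Ω} {P P0 : Ω → H × H}
    (hP : Measurable P) (hP0 : Measurable P0) (hmap : Measure.map P μ = Measure.map P0 μ)
    {F : H × H → ℝ≥0∞} (hF : Measurable F) :
    ∫⁻ ω, F (P ω) ∂μ = ∫⁻ ω, F (P0 ω) ∂μ := by
  rw [← lintegral_map hF hP, hmap, lintegral_map hF hP0]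

lemma map_integral {Ω : Type} [MeasurableSpace Ω] {μ : Measure Ω} {P P0 : Ω → H × H}
    (hP : Measurable P) (hP0 : Measurable P0) (hmap : Measure.map P μ = Measure.map P0 μ)
    {F : H × H → ℝ} (hF : Measurable F) :
    ∫ ω, F (P ω) ∂μ = ∫ ω, F (P0 ω) ∂μ := by
  rw [← integral_map hP.aemeasurable hF.aestronglyMeasurable, hmap,
    integral_map hP0.aemeasurable hF.aestronglyMeasurable]

lemma integral_le_of_lintegral {Ω : Type} [MeasurableSpace Ω] {μ : Measure Ω}
    {f : Ω → ℝ} (hf : AEStronglyMeasurable f μ) (h0 : ∀ ω, 0 ≤ f ω) {M : ℝ} (hM : 0 ≤ M)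
    (h : ∫⁻ ω, ENNReal.ofReal (f ω) ∂μ ≤ ENNReal.ofReal M) :
    ∫ ω, f ω ∂μ ≤ M := by
  rw [integral_eq_lintegral_of_nonneg_ae (Eventually.of_forall h0) hf]
  calc (∫⁻ ω, ENNReal.ofReal (f ω) ∂μ).toReal ≤ (ENNReal.ofReal M).toReal :=
        ENNReal.toReal_mono ENNReal.ofReal_ne_top h
    _ = M := ENNReal.toReal_ofReal hM

lemma prod_moment {Ω : Type} [MeasurableSpace Ω] {μ : Measure Ω} [IsProbabilityMeasure μ]
    {p q : Ω → ℝ} (hp : Measurable p) (hq : Measurable q)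
    (hp0 : ∀ ω, 0 ≤ p ω) (hq0 : ∀ ω, 0 ≤ q ω)
    {η A B : ℝ} (hη : 1 ≤ η) (hA : 0 < A) (hB : 0 < B)
    (h1 : ∫⁻ ω, ENNReal.ofReal (p ω ^ 2) ∂μ ≤ ENNReal.ofReal (η * A ^ 2))
    (h2 : ∫⁻ ω, ENNReal.ofReal (q ω ^ 2) ∂μ ≤ ENNReal.ofReal (η * B ^ 2)) :
    ∫⁻ ω, ENNReal.ofReal (p ω * q ω) ∂μ ≤ ENNReal.ofReal (η * A * B) := by
  have key : ∀ ω, ENNReal.ofReal (p ω * q ω) ≤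
      ENNReal.ofReal (B/(2*A) * p ω ^ 2) + ENNReal.ofReal (A/(2*B) * q ω ^ 2) := by
    intro ω
    rw [← ENNReal.ofReal_add (by positivity) (by positivity)]
    apply ENNReal.ofReal_le_ofReal
    rw [← sub_nonneg]
    have hid : B/(2*A) * p ω ^ 2 + A/(2*B) * q ω ^ 2 - p ω * q ω
        = (B * p ω - A * q ω) ^ 2 / (2 * A * B) := by
      field_simp
      ring
    rw [hid]; positivity
  calc ∫⁻ ω, ENNReal.ofReal (p ω * q ω) ∂μ
      ≤ ∫⁻ ω, (ENNReal.ofReal (B/(2*A) * p ω ^ 2) + ENNReal.ofReal (A/(2*B) * q ω ^ 2)) ∂μ :=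
        lintegral_mono key
    _ = (∫⁻ ω, ENNReal.ofReal (B/(2*A) * p ω ^ 2) ∂μ)
        + ∫⁻ ω, ENNReal.ofReal (A/(2*B) * q ω ^ 2) ∂μ := by
        apply lintegral_add_left
        exact ((hp.pow_const 2).const_mul _).ennreal_ofReal
    _ ≤ ENNReal.ofReal (B/(2*A)) * ENNReal.ofReal (η * A ^ 2)
        + ENNReal.ofReal (A/(2*B)) * ENNReal.ofReal (η * B ^ 2) := by
        gcongr
        · calc ∫⁻ ω, ENNReal.ofReal (B/(2*A) * p ω ^ 2) ∂μ
              = ENNReal.ofReal (B/(2*A)) * ∫⁻ ω, ENNReal.ofReal (p ω ^ 2) ∂μ := by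
                simp_rw [ENNReal.ofReal_mul (by positivity : (0:ℝ) ≤ B/(2*A))]
                exact lintegral_const_mul' _ _ ENNReal.ofReal_ne_top
            _ ≤ _ := by gcongr
        · calc ∫⁻ ω, ENNReal.ofReal (A/(2*B) * q ω ^ 2) ∂μ
              = ENNReal.ofReal (A/(2*B)) * ∫⁻ ω, ENNReal.ofReal (q ω ^ 2) ∂μ := by
                simp_rw [ENNReal.ofReal_mul (by positivity : (0:ℝ) ≤ A/(2*B))]
                exact lintegral_const_mul' _ _ ENNReal.ofReal_ne_top
            _ ≤ _ := by gcongr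
    _ = ENNReal.ofReal (B/(2*A) * (η * A ^ 2)) + ENNReal.ofReal (A/(2*B) * (η * B ^ 2)) := by
        rw [← ENNReal.ofReal_mul (by positivity), ← ENNReal.ofReal_mul (by positivity)]
    _ ≤ ENNReal.ofReal (η * A * B) := by
        rw [← ENNReal.ofReal_add (by positivity) (by positivity)]
        apply ENNReal.ofReal_le_ofReal
        have e1 : B/(2*A) * (η * A ^ 2) = η * A * B / 2 := by field_simp
        have e2 : A/(2*B) * (η * B ^ 2) = η * A * B / 2 := by field_simp
        rw [e1, e2]; linarith

lemma memLp2_of_lintegral {Ω : Type} [MeasurableSpace Ω] {μ : Measure Ω}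
    {f : Ω → ℝ} (hf : Measurable f) {M : ℝ}
    (h : ∫⁻ ω, ENNReal.ofReal (f ω ^ 2) ∂μ ≤ ENNReal.ofReal M) : MemLp f 2 μ := by
  rw [memLp_two_iff_integrable_sq hf.aestronglyMeasurable]
  refine ⟨(hf.pow_const 2).aestronglyMeasurable, ?_⟩
  rw [hasFiniteIntegral_iff_norm]
  have he : ∀ ω, ENNReal.ofReal ‖f ω ^ 2‖ = ENNReal.ofReal (f ω ^ 2) := fun ω => by
    rw [Real.norm_eq_abs, _root_.abs_of_nonneg (sq_nonneg _)]
  simp_rw [he]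
  exact lt_of_le_of_lt h ENNReal.ofReal_lt_top

lemma measurable_cconj : Measurable fun z : ℂ => (starRingEnd ℂ) z := by
  have : Continuous fun z : ℂ => (starRingEnd ℂ) z := continuous_star
  exact this.measurable
set_option maxHeartbeats 4000000 in
/-- Probability that `λ̂_k` falls below the threshold (Lemma A.2, part 2). -/
theorem lemA2_part2 :
    ∃ C : ℝ, 0 < C ∧
      ∀ (Ω : Type) [MeasurableSpace Ω] (μ : Measure Ω) [IsProbabilityMeasure μ]
        (n : ℕ) (X W : Fin n → Ω → H) (X0 W0 : Ω → H) (η τ α ν : ℝ),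
        0 < n → 0 < α → 0 ≤ ν →
        PairModel μ X0 W0 →
        IIDSampleXW μ n X W X0 W0 →
        memF μ X0 W0 8 η τ →
        ∀ k : ℤ, 4 * τ * α * γw k ^ ν ≤ lamPop μ X0 W0 k →
          μ {ω | lamHat α n X W k ω < α * γw k ^ ν} ≤
            ENNReal.ofReal (C * η / (α * n) * EnormSq μ X0 *
              (1 + EnormSq μ W0 / (α * n))) := by
  refine ⟨19, by norm_num, ?_⟩
  intro Ω _ μ _ n X W X0 W0 η τ α ν hn hα hν hPM hIID hF k hk
  obtain ⟨hη1, hτ1, hmX, hmW, hlt⟩ := hF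
  obtain ⟨hX0m, hW0m, hIX, hIW, -, -, -, -⟩ := hPM
  obtain ⟨hXm, hWm, hind, hmap⟩ := hIID
  set g : ℝ := γw k ^ ν with hgdef
  set x : ℝ := xPop μ X0 k with hxdef
  set w : ℝ := wPop μ W0 k with hwdef
  set c : ℂ := cPop μ X0 W0 k with hcdef
  have hn0 : (0:ℝ) < n := Nat.cast_pos.mpr hn
  have hτ0 : (0:ℝ) < τ := lt_of_lt_of_le one_pos hτ1
  have hη0 : (0:ℝ) < η := lt_of_lt_of_le one_pos hη1
  have hγ1 : (1:ℝ) ≤ γw k := by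
    have h0 : 0 ≤ (2 * Real.pi * (k:ℝ)) ^ 2 := sq_nonneg _
    simp only [γw]; linarith
  have hg1 : 1 ≤ g := Real.one_le_rpow hγ1 hν
  have hg0 : 0 < g := lt_of_lt_of_le one_pos hg1
  have hlam : 4 * τ * α * g ≤ ‖c‖ ^ 2 / w := hk
  have hlampos : 0 < ‖c‖ ^ 2 / w :=
    lt_of_lt_of_le (by positivity) hlam
  have hwpos : 0 < w := by
    by_contra hw
    push_neg at hw
    have : ‖c‖ ^ 2 / w ≤ 0 := div_nonpos_of_nonneg_of_nonpos (by positivity) hw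
    linarith
  have hcpos : 0 < ‖c‖ := by
    rcases (norm_nonneg c).lt_or_eq with h | h
    · exact h
    · exfalso; rw [← h] at hlampos; simp at hlampos
  have hclam : 4 * τ * α * g * w ≤ ‖c‖ ^ 2 := (le_div_iff₀ hwpos).mp hlam
  have hlamw : ‖c‖ ^ 2 / w ≤ τ * w := by
    have h5 : (‖c‖ ^ 2 / w) / w ≤ τ := hlt k
    exact (div_le_iff₀ hwpos).mp h5
  have hαgw : 4 * (α * g) ≤ w := by
    have h6 : τ * (4 * (α * g)) ≤ τ * w := by nlinarith
    exact le_of_mul_le_mul_left h6 hτ0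
  have hα_le_αg : α ≤ α * g := by nlinarith
  -- integrability of population coefficients
  have hIa2 : Integrable (fun ω => ‖coef (X0 ω) k‖ ^ 2) μ := by
    apply Integrable.mono' hIX (((coef_meas k).comp hX0m).norm.pow_const 2).aestronglyMeasurable
    filter_upwards with ω
    rw [Real.norm_eq_abs, _root_.abs_of_nonneg (by positivity)]
    exact pow_le_pow_left₀ (norm_nonneg _) (norm_coef_le _ _) 2
  have hIb2 : Integrable (fun ω => ‖coef (W0 ω) k‖ ^ 2) μ := by
    apply Integrable.mono' hIW (((coef_meas k).comp hW0m).norm.pow_const 2).aestronglyMeasurable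
    filter_upwards with ω
    rw [Real.norm_eq_abs, _root_.abs_of_nonneg (by positivity)]
    exact pow_le_pow_left₀ (norm_nonneg _) (norm_coef_le _ _) 2
  have hxnn : 0 ≤ x := integral_nonneg fun ω => by positivity
  have hwrfl : w = ∫ ω, ‖coef (W0 ω) k‖ ^ 2 ∂μ := rfl
  have hxrfl : x = ∫ ω, ‖coef (X0 ω) k‖ ^ 2 ∂μ := rfl
  -- Cauchy-Schwarz: ‖c‖² ≤ x w
  have hIab : Integrable (fun ω => ‖coef (X0 ω) k‖ * ‖coef (W0 ω) k‖) μ := by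
    apply Integrable.mono' (hIa2.add hIb2)
      ((((coef_meas k).comp hX0m).norm.mul ((coef_meas k).comp hW0m).norm).aestronglyMeasurable)
    filter_upwards with ω
    simp only [Function.comp_apply, Pi.add_apply, Pi.mul_apply]
    rw [Real.norm_eq_abs, _root_.abs_of_nonneg (by positivity)]
    nlinarith [sq_nonneg (‖coef (X0 ω) k‖ - ‖coef (W0 ω) k‖), norm_nonneg (coef (X0 ω) k),
      norm_nonneg (coef (W0 ω) k)]
  have hnormc : ‖c‖ ≤ ∫ ω, ‖coef (X0 ω) k‖ * ‖coef (W0 ω) k‖ ∂μ := by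
    calc ‖c‖ ≤ ∫ ω, ‖conj (coef (X0 ω) k) * coef (W0 ω) k‖ ∂μ :=
          norm_integral_le_integral_norm _
      _ = ∫ ω, ‖coef (X0 ω) k‖ * ‖coef (W0 ω) k‖ ∂μ := by
          congr 1; funext ω; rw [norm_mul, RCLike.norm_conj]
  have hkey : ∀ s : ℝ, 0 < s → ‖c‖ ≤ (s * x + w / s) / 2 := by
    intro s hs
    refine hnormc.trans ?_
    have hmono : ∫ ω, ‖coef (X0 ω) k‖ * ‖coef (W0 ω) k‖ ∂μ ≤
        ∫ ω, (s * ‖coef (X0 ω) k‖ ^ 2 + ‖coef (W0 ω) k‖ ^ 2 / s) / 2 ∂μ := by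
      apply integral_mono hIab (((hIa2.const_mul s).add (hIb2.div_const s)).div_const 2)
      intro ω
      simp only [Pi.add_apply]
      rw [← sub_nonneg]
      have hid : (s * ‖coef (X0 ω) k‖ ^ 2 + ‖coef (W0 ω) k‖ ^ 2 / s) / 2 -
          ‖coef (X0 ω) k‖ * ‖coef (W0 ω) k‖
          = (s * ‖coef (X0 ω) k‖ - ‖coef (W0 ω) k‖) ^ 2 / (2 * s) := by
        field_simp; ring
      rw [hid]; positivity
    refine hmono.trans (le_of_eq ?_)
    rw [integral_div, integral_add (hIa2.const_mul s) (hIb2.div_const s),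
      integral_const_mul, integral_div, ← hxrfl, ← hwrfl]
  have hxpos : 0 < x := by
    rcases hxnn.lt_or_eq with h | h
    · exact h
    · exfalso
      have hs : (0:ℝ) < 2 * w / ‖c‖ := by positivity
      have h7 := hkey _ hs
      have h8 : (2 * w / ‖c‖) * x = 0 := by rw [← h]; ring
      have h9 : w / (2 * w / ‖c‖) = ‖c‖ / 2 := by field_simp
      rw [h8, h9] at h7
      linarith
  have hCS : ‖c‖ ^ 2 ≤ x * w := by
    set s : ℝ := Real.sqrt (w / x) with hsdef
    have hs : 0 < s := Real.sqrt_pos.mpr (by positivity)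
    have hss : s ^ 2 = w / x := Real.sq_sqrt (by positivity)
    have hw' : w = s ^ 2 * x := by rw [hss]; field_simp
    have h10 : w / s = s * x := by rw [hw']; field_simp
    have h11 := hkey s hs
    rw [h10] at h11
    have h12 : ‖c‖ ≤ s * x := by linarith
    have h13 : ‖c‖ ^ 2 ≤ (s * x) ^ 2 := by nlinarith [hcpos.le]
    calc ‖c‖ ^ 2 ≤ (s * x) ^ 2 := h13
      _ = s ^ 2 * x ^ 2 := by ring
      _ = x * w := by rw [hss]; field_simp
  have hxlam : ‖c‖ ^ 2 / w ≤ x := by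
    rw [div_le_iff₀ hwpos]; linarith [hCS]
  have hx4α : 4 * α ≤ x := by nlinarith
  have hxEX : x ≤ EnormSq μ X0 := by
    apply integral_mono hIa2 hIX
    intro ω
    exact pow_le_pow_left₀ (norm_nonneg _) (norm_coef_le _ _) 2
  have hEWnn : 0 ≤ EnormSq μ W0 := integral_nonneg fun ω => by positivity
  -- moment bounds
  have hm8X : ∫⁻ ω, ENNReal.ofReal (‖coef (X0 ω) k‖ ^ 8) ∂μ
      ≤ ENNReal.ofReal (η * (x ^ 2) ^ 2) := by
    have he : x ^ (((8:ℕ):ℝ) / 2) = (x ^ 2) ^ 2 := by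
      rw [show ((8:ℕ):ℝ)/2 = ((4:ℕ):ℝ) by norm_num, Real.rpow_natCast]; ring
    rw [← he]; exact hmX k
  have hm8W : ∫⁻ ω, ENNReal.ofReal (‖coef (W0 ω) k‖ ^ 8) ∂μ
      ≤ ENNReal.ofReal (η * (w ^ 2) ^ 2) := by
    have he : w ^ (((8:ℕ):ℝ) / 2) = (w ^ 2) ^ 2 := by
      rw [show ((8:ℕ):ℝ)/2 = ((4:ℕ):ℝ) by norm_num, Real.rpow_natCast]; ring
    rw [← he]; exact hmW k
  have hone : ∫⁻ _ω, ENNReal.ofReal ((1:ℝ) ^ 2) ∂μ ≤ ENNReal.ofReal (η * (1:ℝ) ^ 2) := by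
    simp only [one_pow, ENNReal.ofReal_one, lintegral_const, measure_univ, mul_one]
    exact ENNReal.one_le_ofReal.mpr hη1
  have h4X : ∫⁻ ω, ENNReal.ofReal (‖coef (X0 ω) k‖ ^ 4) ∂μ ≤ ENNReal.ofReal (η * x ^ 2) := by
    have h := prod_moment (μ := μ) (p := fun ω => ‖coef (X0 ω) k‖ ^ 4) (q := fun _ => (1:ℝ))
      (((coef_meas k).comp hX0m).norm.pow_const 4) measurable_const
      (fun ω => by positivity) (fun ω => zero_le_one) hη1
      (A := x ^ 2) (by positivity) one_pos
      (by simpa only [← pow_mul] using hm8X) hone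
    simpa using h
  have h4W : ∫⁻ ω, ENNReal.ofReal (‖coef (W0 ω) k‖ ^ 4) ∂μ ≤ ENNReal.ofReal (η * w ^ 2) := by
    have h := prod_moment (μ := μ) (p := fun ω => ‖coef (W0 ω) k‖ ^ 4) (q := fun _ => (1:ℝ))
      (((coef_meas k).comp hW0m).norm.pow_const 4) measurable_const
      (fun ω => by positivity) (fun ω => zero_le_one) hη1
      (A := w ^ 2) (by positivity) one_pos
      (by simpa only [← pow_mul] using hm8W) hone
    simpa using h
  have hXWmom : ∫⁻ ω, ENNReal.ofReal (‖coef (X0 ω) k‖ ^ 2 * ‖coef (W0 ω) k‖ ^ 2) ∂μ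
      ≤ ENNReal.ofReal (η * x * w) := by
    have h := prod_moment (μ := μ) (p := fun ω => ‖coef (X0 ω) k‖ ^ 2)
      (q := fun ω => ‖coef (W0 ω) k‖ ^ 2)
      (((coef_meas k).comp hX0m).norm.pow_const 2) (((coef_meas k).comp hW0m).norm.pow_const 2)
      (fun ω => by positivity) (fun ω => by positivity) hη1
      (A := x) hxpos hwpos
      (by simpa only [← pow_mul] using h4X) (by simpa only [← pow_mul] using h4W)
    exact h

  -- sample-level random variables
  set gV : H × H → ℝ := fun pr => ‖coef pr.2 k‖ ^ 2 with hgVdef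
  set gZ : H × H → ℂ := fun pr => conj (coef pr.1 k) * coef pr.2 k with hgZdef
  have hgVm : Measurable gV := ((coef_meas k).comp measurable_snd).norm.pow_const 2
  have hgZm : Measurable gZ :=
    (measurable_cconj.comp ((coef_meas k).comp measurable_fst)).mul
      ((coef_meas k).comp measurable_snd)
  set P : Fin n → Ω → H × H := fun i ω => (X i ω, W i ω) with hPdef
  set P0 : Ω → H × H := fun ω => (X0 ω, W0 ω) with hP0def
  have hPm : ∀ i, Measurable (P i) := fun i => (hXm i).prodMk (hWm i)
  have hP0m : Measurable P0 := hX0m.prodMk hW0m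
  set V : Fin n → Ω → ℝ := fun i ω => gV (P i ω) with hVdef
  set ZR : Fin n → Ω → ℝ := fun i ω => (gZ (P i ω)).re with hZRdef
  set ZI : Fin n → Ω → ℝ := fun i ω => (gZ (P i ω)).im with hZIdef
  -- squared-moment bounds for the sample variables
  have hVsq : ∀ i, ∫⁻ ω, ENNReal.ofReal (V i ω ^ 2) ∂μ ≤ ENNReal.ofReal (η * w ^ 2) := by
    intro i
    have ht := map_lintegral (hPm i) hP0m (hmap i)
      (F := fun pr => ENNReal.ofReal (‖coef pr.2 k‖ ^ 4))
      ((((coef_meas k).comp measurable_snd).norm.pow_const 4).ennreal_ofReal)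
    calc ∫⁻ ω, ENNReal.ofReal (V i ω ^ 2) ∂μ
        = ∫⁻ ω, ENNReal.ofReal (‖coef (W i ω) k‖ ^ 4) ∂μ := by
          apply lintegral_congr; intro ω
          congr 1
          show (‖coef (W i ω) k‖ ^ 2) ^ 2 = ‖coef (W i ω) k‖ ^ 4
          ring
      _ = ∫⁻ ω, ENNReal.ofReal (‖coef (W0 ω) k‖ ^ 4) ∂μ := ht
      _ ≤ ENNReal.ofReal (η * w ^ 2) := h4W
  have hprodbound : ∀ z : ℂ, ∀ pr : H × H, z = gZ pr →
      ‖z‖ ^ 2 = ‖coef pr.1 k‖ ^ 2 * ‖coef pr.2 k‖ ^ 2 := by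
    intro z pr hz
    rw [hz, hgZdef]
    simp only [norm_mul, RCLike.norm_conj, mul_pow]
  have hZRsq : ∀ i, ∫⁻ ω, ENNReal.ofReal (ZR i ω ^ 2) ∂μ ≤ ENNReal.ofReal (η * x * w) := by
    intro i
    have ht := map_lintegral (hPm i) hP0m (hmap i)
      (F := fun pr => ENNReal.ofReal (‖coef pr.1 k‖ ^ 2 * ‖coef pr.2 k‖ ^ 2))
      (((((coef_meas k).comp measurable_fst).norm.pow_const 2).mul
        (((coef_meas k).comp measurable_snd).norm.pow_const 2)).ennreal_ofReal)
    calc ∫⁻ ω, ENNReal.ofReal (ZR i ω ^ 2) ∂μ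
        ≤ ∫⁻ ω, ENNReal.ofReal (‖coef (X i ω) k‖ ^ 2 * ‖coef (W i ω) k‖ ^ 2) ∂μ := by
          apply lintegral_mono; intro ω
          apply ENNReal.ofReal_le_ofReal
          have h1 : (gZ (P i ω)).re ^ 2 ≤ ‖gZ (P i ω)‖ ^ 2 := by
            rw [← _root_.sq_abs ((gZ (P i ω)).re)]
            apply pow_le_pow_left₀ (abs_nonneg _) ?_ 2
            exact Complex.abs_re_le_norm _
          calc ZR i ω ^ 2 = (gZ (P i ω)).re ^ 2 := rfl
            _ ≤ ‖gZ (P i ω)‖ ^ 2 := h1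
            _ = ‖coef (X i ω) k‖ ^ 2 * ‖coef (W i ω) k‖ ^ 2 :=
                hprodbound _ (P i ω) rfl
      _ = ∫⁻ ω, ENNReal.ofReal (‖coef (X0 ω) k‖ ^ 2 * ‖coef (W0 ω) k‖ ^ 2) ∂μ := ht
      _ ≤ ENNReal.ofReal (η * x * w) := hXWmom
  have hZIsq : ∀ i, ∫⁻ ω, ENNReal.ofReal (ZI i ω ^ 2) ∂μ ≤ ENNReal.ofReal (η * x * w) := by
    intro i
    have ht := map_lintegral (hPm i) hP0m (hmap i)
      (F := fun pr => ENNReal.ofReal (‖coef pr.1 k‖ ^ 2 * ‖coef pr.2 k‖ ^ 2))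
      (((((coef_meas k).comp measurable_fst).norm.pow_const 2).mul
        (((coef_meas k).comp measurable_snd).norm.pow_const 2)).ennreal_ofReal)
    calc ∫⁻ ω, ENNReal.ofReal (ZI i ω ^ 2) ∂μ
        ≤ ∫⁻ ω, ENNReal.ofReal (‖coef (X i ω) k‖ ^ 2 * ‖coef (W i ω) k‖ ^ 2) ∂μ := by
          apply lintegral_mono; intro ω
          apply ENNReal.ofReal_le_ofReal
          have h1 : (gZ (P i ω)).im ^ 2 ≤ ‖gZ (P i ω)‖ ^ 2 := by
            rw [← _root_.sq_abs ((gZ (P i ω)).im)]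
            apply pow_le_pow_left₀ (abs_nonneg _) ?_ 2
            exact Complex.abs_im_le_norm _
          calc ZI i ω ^ 2 = (gZ (P i ω)).im ^ 2 := rfl
            _ ≤ ‖gZ (P i ω)‖ ^ 2 := h1
            _ = ‖coef (X i ω) k‖ ^ 2 * ‖coef (W i ω) k‖ ^ 2 :=
                hprodbound _ (P i ω) rfl
      _ = ∫⁻ ω, ENNReal.ofReal (‖coef (X0 ω) k‖ ^ 2 * ‖coef (W0 ω) k‖ ^ 2) ∂μ := ht
      _ ≤ ENNReal.ofReal (η * x * w) := hXWmom
  -- MemLp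
  have hVmem : ∀ i, MemLp (V i) 2 μ := fun i =>
    memLp2_of_lintegral (hgVm.comp (hPm i)) (hVsq i)
  have hZRmem : ∀ i, MemLp (ZR i) 2 μ := fun i =>
    memLp2_of_lintegral (Complex.measurable_re.comp (hgZm.comp (hPm i))) (hZRsq i)
  have hZImem : ∀ i, MemLp (ZI i) 2 μ := fun i =>
    memLp2_of_lintegral (Complex.measurable_im.comp (hgZm.comp (hPm i))) (hZIsq i)
  -- means
  have hVmean : ∀ i, ∫ ω, V i ω ∂μ = w := by
    intro i
    have ht := map_integral (hPm i) hP0m (hmap i) (F := gV) hgVm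
    exact ht.trans rfl
  have hIgz : Integrable (fun ω => gZ (P0 ω)) μ := by
    apply Integrable.mono' (hIa2.add hIb2) ((hgZm.comp hP0m).aestronglyMeasurable)
    filter_upwards with ω
    simp only [Function.comp_apply, Pi.add_apply]
    have hn2 : ‖gZ (P0 ω)‖ = ‖coef (X0 ω) k‖ * ‖coef (W0 ω) k‖ := by
      simp only [hgZdef, hP0def, norm_mul, RCLike.norm_conj]
    rw [hn2]
    nlinarith [sq_nonneg (‖coef (X0 ω) k‖ - ‖coef (W0 ω) k‖), norm_nonneg (coef (X0 ω) k),
      norm_nonneg (coef (W0 ω) k)]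
  have hgzc : (∫ ω, gZ (P0 ω) ∂μ) = c := rfl
  have hZRmean : ∀ i, ∫ ω, ZR i ω ∂μ = c.re := by
    intro i
    have ht := map_integral (hPm i) hP0m (hmap i) (F := fun pr => (gZ pr).re)
      (Complex.measurable_re.comp hgZm)
    have h2 : ∫ ω, (gZ (P0 ω)).re ∂μ = c.re := by
      have h3 := integral_re (μ := μ) (f := fun ω => gZ (P0 ω)) hIgz
      simp only [RCLike.re_to_complex] at h3
      rw [h3, hgzc]
    exact ht.trans h2
  have hZImean : ∀ i, ∫ ω, ZI i ω ∂μ = c.im := by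
    intro i
    have ht := map_integral (hPm i) hP0m (hmap i) (F := fun pr => (gZ pr).im)
      (Complex.measurable_im.comp hgZm)
    have h2 : ∫ ω, (gZ (P0 ω)).im ∂μ = c.im := by
      have h3 := integral_im (μ := μ) (f := fun ω => gZ (P0 ω)) hIgz
      simp only [RCLike.im_to_complex] at h3
      rw [h3, hgzc]
    exact ht.trans h2
  -- variances
  have hVvar : ∀ i, variance (V i) μ ≤ η * w ^ 2 := by
    intro i
    refine (variance_le_expectation_sq (hVmem i).1).trans ?_
    exact integral_le_of_lintegral
      ((hgVm.comp (hPm i)).pow_const 2).aestronglyMeasurable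
      (fun ω => sq_nonneg _) (by positivity) (hVsq i)
  have hZRvar : ∀ i, variance (ZR i) μ ≤ η * x * w := by
    intro i
    refine (variance_le_expectation_sq (hZRmem i).1).trans ?_
    exact integral_le_of_lintegral
      ((Complex.measurable_re.comp (hgZm.comp (hPm i))).pow_const 2).aestronglyMeasurable
      (fun ω => sq_nonneg _) (by positivity) (hZRsq i)
  have hZIvar : ∀ i, variance (ZI i) μ ≤ η * x * w := by
    intro i
    refine (variance_le_expectation_sq (hZImem i).1).trans ?_
    exact integral_le_of_lintegral
      ((Complex.measurable_im.comp (hgZm.comp (hPm i))).pow_const 2).aestronglyMeasurable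
      (fun ω => sq_nonneg _) (by positivity) (hZIsq i)
  -- pairwise independence
  have hpairV : Set.Pairwise ((Finset.univ : Finset (Fin n)) : Set (Fin n)) (fun i j => IndepFun (V i) (V j) μ) := by
    intro i _ j _ hij
    exact (hind.comp (fun _ => gV) (fun _ => hgVm)).indepFun hij
  have hpairR : Set.Pairwise ((Finset.univ : Finset (Fin n)) : Set (Fin n)) (fun i j => IndepFun (ZR i) (ZR j) μ) := by
    intro i _ j _ hij
    exact (hind.comp (fun _ pr => (gZ pr).re)
      (fun _ => Complex.measurable_re.comp hgZm)).indepFun hij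
  have hpairI : Set.Pairwise ((Finset.univ : Finset (Fin n)) : Set (Fin n)) (fun i j => IndepFun (ZI i) (ZI j) μ) := by
    intro i _ j _ hij
    exact (hind.comp (fun _ pr => (gZ pr).im)
      (fun _ => Complex.measurable_im.comp hgZm)).indepFun hij
  -- sums
  have hTVmean : (∫ a, (∑ i, V i) a ∂μ) = n * w := by
    have h1 : (∫ a, (∑ i, V i) a ∂μ) = ∑ i, ∫ ω, V i ω ∂μ := by
      simp_rw [Finset.sum_apply]
      exact integral_finset_sum _ (fun i _ => (hVmem i).integrable one_le_two)
    rw [h1]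
    simp [hVmean, Finset.sum_const, Finset.card_univ, nsmul_eq_mul]
  have hTRmean : (∫ a, (∑ i, ZR i) a ∂μ) = n * c.re := by
    have h1 : (∫ a, (∑ i, ZR i) a ∂μ) = ∑ i, ∫ ω, ZR i ω ∂μ := by
      simp_rw [Finset.sum_apply]
      exact integral_finset_sum _ (fun i _ => (hZRmem i).integrable one_le_two)
    rw [h1]
    simp [hZRmean, Finset.sum_const, Finset.card_univ, nsmul_eq_mul]
  have hTImean : (∫ a, (∑ i, ZI i) a ∂μ) = n * c.im := by
    have h1 : (∫ a, (∑ i, ZI i) a ∂μ) = ∑ i, ∫ ω, ZI i ω ∂μ := by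
      simp_rw [Finset.sum_apply]
      exact integral_finset_sum _ (fun i _ => (hZImem i).integrable one_le_two)
    rw [h1]
    simp [hZImean, Finset.sum_const, Finset.card_univ, nsmul_eq_mul]
  have hTVvar : variance (∑ i, V i) μ ≤ n * (η * w ^ 2) := by
    rw [IndepFun.variance_sum (fun i _ => hVmem i) hpairV]
    calc ∑ i : Fin n, variance (V i) μ ≤ ∑ _i : Fin n, (η * w ^ 2) :=
          Finset.sum_le_sum (fun i _ => hVvar i)
      _ = n * (η * w ^ 2) := by
          simp [Finset.sum_const, Finset.card_univ, nsmul_eq_mul]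
  have hTRvar : variance (∑ i, ZR i) μ ≤ n * (η * x * w) := by
    rw [IndepFun.variance_sum (fun i _ => hZRmem i) hpairR]
    calc ∑ i : Fin n, variance (ZR i) μ ≤ ∑ _i : Fin n, (η * x * w) :=
          Finset.sum_le_sum (fun i _ => hZRvar i)
      _ = n * (η * x * w) := by
          simp [Finset.sum_const, Finset.card_univ, nsmul_eq_mul]
  have hTIvar : variance (∑ i, ZI i) μ ≤ n * (η * x * w) := by
    rw [IndepFun.variance_sum (fun i _ => hZImem i) hpairI]
    calc ∑ i : Fin n, variance (ZI i) μ ≤ ∑ _i : Fin n, (η * x * w) :=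
          Finset.sum_le_sum (fun i _ => hZIvar i)
      _ = n * (η * x * w) := by
          simp [Finset.sum_const, Finset.card_univ, nsmul_eq_mul]
  -- Chebyshev
  have hchebV := meas_ge_le_variance_div_sq (μ := μ) (X := ∑ i, V i)
    (memLp_finset_sum' Finset.univ (fun (i : Fin n) _ => hVmem i)) (c := 3 * n * w / 4) (by positivity)
  rw [hTVmean] at hchebV
  have hchebR := meas_ge_le_variance_div_sq (μ := μ) (X := ∑ i, ZR i)
    (memLp_finset_sum' Finset.univ (fun (i : Fin n) _ => hZRmem i)) (c := (n : ℝ) * ‖c‖ / 6) (by positivity)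
  rw [hTRmean] at hchebR
  have hchebI := meas_ge_le_variance_div_sq (μ := μ) (X := ∑ i, ZI i)
    (memLp_finset_sum' Finset.univ (fun (i : Fin n) _ => hZImem i)) (c := (n : ℝ) * ‖c‖ / 6) (by positivity)
  rw [hTImean] at hchebI
  -- event inclusion
  have hsub : {ω | lamHat α n X W k ω < α * g} ⊆
      {ω | 3 * (n : ℝ) * w / 4 ≤ |(∑ i, V i) ω - (n : ℝ) * w|} ∪
      ({ω | (n : ℝ) * ‖c‖ / 6 ≤ |(∑ i, ZR i) ω - (n : ℝ) * c.re|} ∪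
       {ω | (n : ℝ) * ‖c‖ / 6 ≤ |(∑ i, ZI i) ω - (n : ℝ) * c.im|}) := by
    intro ω hω
    simp only [Set.mem_setOf_eq] at hω
    by_contra hnot
    simp only [Set.mem_union, Set.mem_setOf_eq, not_or, not_le] at hnot
    obtain ⟨h1, h2, h3⟩ := hnot
    have hSV : (∑ i, V i) ω = (n : ℝ) * wHat n W k ω := by
      rw [Finset.sum_apply, wHat, ← mul_assoc, mul_inv_cancel₀ (ne_of_gt hn0), one_mul]
    have hwh1 : |wHat n W k ω - w| < 3 * w / 4 := by
      have hd : (∑ i, V i) ω - (n : ℝ) * w = (n : ℝ) * (wHat n W k ω - w) := by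
        rw [hSV]; ring
      rw [hd, abs_mul, abs_of_pos hn0] at h1
      have := (mul_lt_mul_iff_right₀ hn0).mp (by linarith : (n:ℝ) * |wHat n W k ω - w| < (n:ℝ) * (3 * w / 4))
      linarith [this]
    have hnc : ((n : ℂ))⁻¹ = (((n : ℝ)⁻¹ : ℝ) : ℂ) := by push_cast; ring
    have hcre : (cHat n X W k ω).re = (n : ℝ)⁻¹ * (∑ i, ZR i) ω := by
      rw [cHat, hnc, Complex.re_ofReal_mul, Complex.re_sum, Finset.sum_apply]
    have hcim : (cHat n X W k ω).im = (n : ℝ)⁻¹ * (∑ i, ZI i) ω := by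
      rw [cHat, hnc, Complex.im_ofReal_mul, Complex.im_sum, Finset.sum_apply]
    have hre : |(cHat n X W k ω).re - c.re| < ‖c‖ / 6 := by
      have hd : (∑ i, ZR i) ω - (n : ℝ) * c.re = (n : ℝ) * ((cHat n X W k ω).re - c.re) := by
        rw [hcre]; field_simp
      rw [hd, abs_mul, abs_of_pos hn0] at h2
      have := (mul_lt_mul_iff_right₀ hn0).mp (by linarith : (n:ℝ) * |(cHat n X W k ω).re - c.re| < (n:ℝ) * (‖c‖ / 6))
      linarith [this]
    have him : |(cHat n X W k ω).im - c.im| < ‖c‖ / 6 := by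
      have hd : (∑ i, ZI i) ω - (n : ℝ) * c.im = (n : ℝ) * ((cHat n X W k ω).im - c.im) := by
        rw [hcim]; field_simp
      rw [hd, abs_mul, abs_of_pos hn0] at h3
      have := (mul_lt_mul_iff_right₀ hn0).mp (by linarith : (n:ℝ) * |(cHat n X W k ω).im - c.im| < (n:ℝ) * (‖c‖ / 6))
      linarith [this]
    obtain ⟨hwl, hwr⟩ := abs_lt.mp hwh1
    have hwhge : α ≤ wHat n W k ω := by linarith
    have hwhpos : (0: ℝ) < wHat n W k ω := lt_of_lt_of_le hα hwhge
    rw [lamHat, if_pos hwhge] at hω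
    have hcc : ‖cHat n X W k ω‖ ^ 2 < α * g * wHat n W k ω := by
      rw [div_lt_iff₀ hwhpos] at hω
      linarith [hω]
    have hnormsq : ‖cHat n X W k ω - c‖ ^ 2 =
        ((cHat n X W k ω).re - c.re) ^ 2 + ((cHat n X W k ω).im - c.im) ^ 2 := by
      rw [Complex.sq_norm, Complex.normSq_apply, Complex.sub_re,
        Complex.sub_im]
      ring
    have hdist : ‖cHat n X W k ω - c‖ ^ 2 < ‖c‖ ^ 2 / 18 := by
      have hr2 : ((cHat n X W k ω).re - c.re) ^ 2 < (‖c‖ / 6) ^ 2 :=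
        sq_lt_sq' (abs_lt.mp hre).1 (abs_lt.mp hre).2
      have hi2 : ((cHat n X W k ω).im - c.im) ^ 2 < (‖c‖ / 6) ^ 2 :=
        sq_lt_sq' (abs_lt.mp him).1 (abs_lt.mp him).2
      rw [hnormsq]
      nlinarith only [hr2, hi2, hcpos, norm_nonneg c]
    have hrr : ‖cHat n X W k ω - c‖ < ‖c‖ / 4 := by
      nlinarith only [norm_nonneg (cHat n X W k ω - c), hcpos, hdist]
    have hlb : ‖c‖ - ‖cHat n X W k ω - c‖ ≤ ‖cHat n X W k ω‖ := by
      have := norm_sub_norm_le c (cHat n X W k ω)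
      rw [norm_sub_rev] at this
      linarith
    have h4agw : 4 * (α * g) * w ≤ ‖c‖ ^ 2 := by
      nlinarith only [hclam, hτ1, hα, hg0, hwpos]
    have hstep1 : α * g * wHat n W k ω < α * g * (7 * w / 4) :=
      mul_lt_mul_of_pos_left (by linarith) (by positivity)
    have hstep2 : α * g * (7 * w / 4) ≤ 7 * ‖c‖ ^ 2 / 16 := by
      nlinarith only [h4agw]
    have hstep3 : 3 * ‖c‖ / 4 ≤ ‖cHat n X W k ω‖ := by linarith
    have hstep4 : 9 * ‖c‖ ^ 2 / 16 ≤ ‖cHat n X W k ω‖ ^ 2 := by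
      nlinarith only [hstep3, hcpos, norm_nonneg (cHat n X W k ω)]
    linarith [hcc, hstep1, hstep2, hstep4, pow_pos hcpos 2]
  -- final assembly
  have b1 : variance (∑ i, V i) μ / (3 * n * w / 4) ^ 2 ≤ 16 * η / (9 * n) := by
    rw [div_le_iff₀ (by positivity)]
    calc variance (∑ i, V i) μ ≤ n * (η * w ^ 2) := hTVvar
      _ = 16 * η / (9 * n) * (3 * n * w / 4) ^ 2 := by field_simp; ring
  have b2 : variance (∑ i, ZR i) μ / ((n : ℝ) * ‖c‖ / 6) ^ 2 ≤ 9 * η * x / (α * n) := by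
    rw [div_le_iff₀ (by positivity)]
    calc variance (∑ i, ZR i) μ ≤ n * (η * x * w) := hTRvar
      _ ≤ 9 * η * x / (α * n) * ((n : ℝ) * ‖c‖ / 6) ^ 2 := by
        have hτg : 1 ≤ τ * g := by nlinarith only [hτ1, hg1]
        have h4aw : 4 * α * w ≤ ‖c‖ ^ 2 := by
          nlinarith only [hclam, hτg, mul_pos hα hwpos]
        rw [div_mul_eq_mul_div, le_div_iff₀ (by positivity)]
        nlinarith [mul_le_mul_of_nonneg_left h4aw
          (show (0:ℝ) ≤ η * x * (n:ℝ) ^ 2 / 4 by positivity)]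
  have b3 : variance (∑ i, ZI i) μ / ((n : ℝ) * ‖c‖ / 6) ^ 2 ≤ 9 * η * x / (α * n) := by
    rw [div_le_iff₀ (by positivity)]
    calc variance (∑ i, ZI i) μ ≤ n * (η * x * w) := hTIvar
      _ ≤ 9 * η * x / (α * n) * ((n : ℝ) * ‖c‖ / 6) ^ 2 := by
        have hτg : 1 ≤ τ * g := by nlinarith only [hτ1, hg1]
        have h4aw : 4 * α * w ≤ ‖c‖ ^ 2 := by
          nlinarith only [hclam, hτg, mul_pos hα hwpos]
        rw [div_mul_eq_mul_div, le_div_iff₀ (by positivity)]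
        nlinarith [mul_le_mul_of_nonneg_left h4aw
          (show (0:ℝ) ≤ η * x * (n:ℝ) ^ 2 / 4 by positivity)]
  calc μ {ω | lamHat α n X W k ω < α * g}
      ≤ μ ({ω | 3 * (n : ℝ) * w / 4 ≤ |(∑ i, V i) ω - (n : ℝ) * w|} ∪
          ({ω | (n : ℝ) * ‖c‖ / 6 ≤ |(∑ i, ZR i) ω - (n : ℝ) * c.re|} ∪
           {ω | (n : ℝ) * ‖c‖ / 6 ≤ |(∑ i, ZI i) ω - (n : ℝ) * c.im|})) := measure_mono hsub
    _ ≤ μ {ω | 3 * (n : ℝ) * w / 4 ≤ |(∑ i, V i) ω - (n : ℝ) * w|} +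
        μ ({ω | (n : ℝ) * ‖c‖ / 6 ≤ |(∑ i, ZR i) ω - (n : ℝ) * c.re|} ∪
           {ω | (n : ℝ) * ‖c‖ / 6 ≤ |(∑ i, ZI i) ω - (n : ℝ) * c.im|}) := measure_union_le _ _
    _ ≤ μ {ω | 3 * (n : ℝ) * w / 4 ≤ |(∑ i, V i) ω - (n : ℝ) * w|} +
        (μ {ω | (n : ℝ) * ‖c‖ / 6 ≤ |(∑ i, ZR i) ω - (n : ℝ) * c.re|} +
         μ {ω | (n : ℝ) * ‖c‖ / 6 ≤ |(∑ i, ZI i) ω - (n : ℝ) * c.im|}) :=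
        add_le_add_right (measure_union_le _ _) _
    _ ≤ ENNReal.ofReal (variance (∑ i, V i) μ / (3 * n * w / 4) ^ 2) +
        (ENNReal.ofReal (variance (∑ i, ZR i) μ / ((n : ℝ) * ‖c‖ / 6) ^ 2) +
         ENNReal.ofReal (variance (∑ i, ZI i) μ / ((n : ℝ) * ‖c‖ / 6) ^ 2)) :=
        add_le_add hchebV (add_le_add hchebR hchebI)
    _ ≤ ENNReal.ofReal (16 * η / (9 * n)) +
        (ENNReal.ofReal (9 * η * x / (α * n)) + ENNReal.ofReal (9 * η * x / (α * n))) :=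
        add_le_add (ENNReal.ofReal_le_ofReal b1)
          (add_le_add (ENNReal.ofReal_le_ofReal b2) (ENNReal.ofReal_le_ofReal b3))
    _ = ENNReal.ofReal (16 * η / (9 * n) + (9 * η * x / (α * n) + 9 * η * x / (α * n))) := by
        rw [← ENNReal.ofReal_add (by positivity) (by positivity),
          ← ENNReal.ofReal_add (by positivity) (by positivity)]
    _ ≤ ENNReal.ofReal (19 * η / (α * n) * EnormSq μ X0 * (1 + EnormSq μ W0 / (α * n))) := by
        apply ENNReal.ofReal_le_ofReal
        have p1 : 16 * η / (9 * n) ≤ η * x / (α * n) := by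
          rw [div_le_div_iff₀ (by positivity) (by positivity)]
          nlinarith [mul_le_mul_of_nonneg_left hx4α (show (0:ℝ) ≤ η * n by positivity),
            mul_nonneg (mul_nonneg hη0.le hxnn) hn0.le]
        have hEW : (0:ℝ) ≤ EnormSq μ W0 / (α * n) := div_nonneg hEWnn (by positivity)
        have p3 : 19 * η * x / (α * n) ≤
            19 * η / (α * n) * EnormSq μ X0 * (1 + EnormSq μ W0 / (α * n)) := by
          have h1' : (1:ℝ) ≤ 1 + EnormSq μ W0 / (α * n) := le_add_of_nonneg_right hEW
          calc 19 * η * x / (α * n) = (19 * η / (α * n)) * x * 1 := by ring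
            _ ≤ (19 * η / (α * n)) * EnormSq μ X0 * (1 + EnormSq μ W0 / (α * n)) :=
                mul_le_mul (mul_le_mul_of_nonneg_left hxEX (by positivity)) h1' zero_le_one
                  (mul_nonneg (by positivity) (hxnn.trans hxEX))
        have p2 : η * x / (α * n) + (9 * η * x / (α * n) + 9 * η * x / (α * n))
            = 19 * η * x / (α * n) := by ring
        linarith [p1, p3]

end FLIR
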